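/- Let f : ℂ → ℂ be an entire function (differentiable on all of ℂ), let t > 0 be real, and let M ∈ [0,∞]. Suppose that for every a ∈ ℂ, ∑_{z : f(z) = a} (f^×(z))^{−t} ≤ M, the sum being taken in [0,∞] with the convention 1/0 = ∞. Then for every integer n ≥ 1 and every a ∈ ℂ, ∑_{z : f^n(z) = a} ((f^n)^×(z))^{−t} ≤ M^n. -/

import Mathlib

open scoped ENNReal

/-- The spherical derivative `h^×(z) = |h′(z)|·(1+|z|²)/(1+|h(z)|²)` of an entire
function `h` at `z`. -/
noncomputable def sphDeriv (h : ℂ → ℂ) (z : ℂ) : ℝ :=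
  ‖deriv h z‖ * (1 + ‖z‖ ^ 2) / (1 + ‖h z‖ ^ 2)

/-- The Perron–Frobenius–Ruelle fiber sum `∑_{z : f^k(z) = b} ((f^k)^×(z))^{−t}`,
taken in `[0,∞]` with the convention `0^(−t) = ∞` for `t > 0`. -/
noncomputable def fiberSum (f : ℂ → ℂ) (k : ℕ) (t : ℝ) (b : ℂ) : ℝ≥0∞ :=
  ∑' z : {z : ℂ // f^[k] z = b}, (ENNReal.ofReal (sphDeriv f^[k] z)) ^ (-t)

lemma sphDeriv_nonneg (h : ℂ → ℂ) (z : ℂ) : 0 ≤ sphDeriv h z := by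
  unfold sphDeriv; positivity

lemma sphDeriv_comp (f g : ℂ → ℂ) (z : ℂ) (hf : DifferentiableAt ℂ f (g z))
    (hg : DifferentiableAt ℂ g z) :
    sphDeriv (f ∘ g) z = sphDeriv f (g z) * sphDeriv g z := by
  unfold sphDeriv
  rw [deriv_comp z hf hg, norm_mul]
  have h1 : (0:ℝ) < 1 + ‖g z‖ ^ 2 := by positivity
  have h2 : (0:ℝ) < 1 + ‖f (g z)‖ ^ 2 := by positivity
  simp only [Function.comp_apply]
  field_simp

/-- Decomposition of the `(k+1)`-fiber as a sigma over the `1`-fiber of `f`. -/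
def fiberEquiv (f : ℂ → ℂ) (k : ℕ) (a : ℂ) :
    {z : ℂ // f^[k+1] z = a} ≃ Σ w : {w : ℂ // f w = a}, {z : ℂ // f^[k] z = w.1} where
  toFun z := ⟨⟨f^[k] z.1, by
      have := z.2; rw [Function.iterate_succ_apply'] at this; exact this⟩, ⟨z.1, rfl⟩⟩
  invFun p := ⟨p.2.1, by rw [Function.iterate_succ_apply', p.2.2]; exact p.1.2⟩
  left_inv z := rfl
  right_inv p := by
    obtain ⟨⟨w, hw⟩, zz⟩ := p
    obtain ⟨z, hz⟩ := zz
    dsimp only at hz ⊢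
    subst hz
    rfl

lemma fiberSum_succ (f : ℂ → ℂ) (hf : Differentiable ℂ f) (t : ℝ) (k : ℕ) (a : ℂ) :
    fiberSum f (k+1) t a =
      ∑' w : {w : ℂ // f w = a},
        (ENNReal.ofReal (sphDeriv f w.1)) ^ (-t) * fiberSum f k t w.1 := by
  unfold fiberSum
  rw [← Equiv.tsum_eq (fiberEquiv f k a).symm]
  rw [ENNReal.tsum_sigma']
  congr 1
  funext w
  rw [← ENNReal.tsum_mul_left]
  apply tsum_congr
  intro z
  have hz : f^[k] z.1 = w.1 := z.2
  have hcomp : f^[k+1] ((fiberEquiv f k a).symm ⟨w, z⟩).1 = a :=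
    ((fiberEquiv f k a).symm ⟨w, z⟩).2
  have h1 : ((fiberEquiv f k a).symm ⟨w, z⟩).1 = z.1 := rfl
  rw [h1]
  have hchain : sphDeriv f^[k+1] z.1 = sphDeriv f w.1 * sphDeriv f^[k] z.1 := by
    have : sphDeriv (f ∘ f^[k]) z.1 = sphDeriv f (f^[k] z.1) * sphDeriv f^[k] z.1 :=
      sphDeriv_comp f (f^[k]) z.1 (hf.differentiableAt) ((hf.iterate k).differentiableAt)
    rw [← Function.iterate_succ' f k] at this
    rw [this, hz]
  rw [hchain, ENNReal.ofReal_mul (sphDeriv_nonneg f w.1),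
    ENNReal.mul_rpow_of_ne_top ENNReal.ofReal_ne_top ENNReal.ofReal_ne_top]

lemma fiberSum_one (f : ℂ → ℂ) (t : ℝ) (a : ℂ) :
    fiberSum f 1 t a = ∑' z : {z : ℂ // f z = a}, (ENNReal.ofReal (sphDeriv f z.1)) ^ (-t) := by
  unfold fiberSum
  rw [Function.iterate_one]

/-- Lemma 3.5(iv), for entire `f`: if `∑_{f(z)=a} (f^×(z))^{−t} ≤ M` for every `a`, then
`∑_{f^n(z)=a} ((f^n)^×(z))^{−t} ≤ Mⁿ` for every `n ≥ 1` and every `a`. -/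
theorem fiberSum_iterate_le_pow (f : ℂ → ℂ) (hf : Differentiable ℂ f)
    (t : ℝ) (ht : 0 < t) (M : ℝ≥0∞) (hM : ∀ a : ℂ, fiberSum f 1 t a ≤ M) :
    ∀ n : ℕ, 1 ≤ n → ∀ a : ℂ, fiberSum f n t a ≤ M ^ n := by
  have key : ∀ n : ℕ, ∀ a : ℂ, fiberSum f (n+1) t a ≤ M ^ (n+1) := by
    intro n
    induction n with
    | zero => intro a; simpa using hM a
    | succ k ih =>
      intro a
      rw [fiberSum_succ f hf t (k+1) a]
      calc ∑' w : {w : ℂ // f w = a},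
            (ENNReal.ofReal (sphDeriv f w.1)) ^ (-t) * fiberSum f (k+1) t w.1
          ≤ ∑' w : {w : ℂ // f w = a},
            (ENNReal.ofReal (sphDeriv f w.1)) ^ (-t) * M ^ (k+1) := by
            exact ENNReal.tsum_le_tsum fun w => mul_le_mul_right (ih w.1) _
        _ = (∑' w : {w : ℂ // f w = a}, (ENNReal.ofReal (sphDeriv f w.1)) ^ (-t)) * M ^ (k+1) :=
            ENNReal.tsum_mul_right
        _ ≤ M * M ^ (k+1) := by
            have := hM a
            rw [fiberSum_one f t a] at this
            exact mul_le_mul_left this _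
        _ = M ^ (k+1+1) := by ring
  intro n hn a
  obtain ⟨m, rfl⟩ := Nat.exists_eq_add_of_le hn
  simpa [Nat.add_comm] using key m a
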